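/- A multigraph G is Mengerian for time if and only if every subgraph H of G is Mengerian for time. -/

import Mathlib

/-- A (finite, loopless) multigraph: a vertex type, an edge type, and an
endpoints function assigning to each edge an unordered pair of distinct vertices. -/
structure Multigraph where
  V : Type
  E : Type
  fintypeV : Fintype V
  decEqV : DecidableEq V
  fintypeE : Fintype E
  decEqE : DecidableEq E
  ends : E → Sym2 V
  loopless : ∀ e, ¬ (ends e).IsDiag

attribute [instance] Multigraph.fintypeV Multigraph.decEqV Multigraph.fintypeE Multigraph.decEqE

/-- A temporal `s,z`-path in the temporal graph `(G, lam)`: an alternating sequence of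
pairwise distinct vertices and edges, starting at `s`, ending at `z`, whose edges appear
at non-decreasing timesteps. -/
structure TPath (G : Multigraph) (lam : G.E → ℕ) (s z : G.V) where
  verts : List G.V
  edges : List G.E
  len_eq : verts.length = edges.length + 1
  head_eq : verts.head? = some s
  last_eq : verts.getLast? = some z
  nodup : verts.Nodup
  ends_eq : ∀ (i : ℕ) (h : i < edges.length),
      G.ends (edges.get ⟨i, h⟩) = s(verts.get ⟨i, by omega⟩, verts.get ⟨i + 1, by omega⟩)
  mono : List.Chain' (· ≤ ·) (edges.map lam)

/-- The set of timesteps at which a temporal path is active. -/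
def TPath.times {G : Multigraph} {lam : G.E → ℕ} {s z : G.V} (P : TPath G lam s z) : Set ℕ :=
  {t | ∃ e ∈ P.edges, lam e = t}

/-- Two temporal `s,z`-paths are snapshot disjoint if they are not both active at any
common timestep. -/
def SnapDisjoint {G : Multigraph} {lam : G.E → ℕ} {s z : G.V} (P Q : TPath G lam s z) : Prop :=
  P.times ∩ Q.times = ∅

/-- A set `S` of timesteps is a snapshot `s,z`-cut if every temporal `s,z`-path uses an
edge active at some timestep in `S`. -/
def IsSnapCut (G : Multigraph) (lam : G.E → ℕ) (s z : G.V) (S : Set ℕ) : Prop :=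
  ∀ P : TPath G lam s z, ∃ e ∈ P.edges, lam e ∈ S

/-- `maxD G lam s z`: the maximum number of pairwise snapshot disjoint temporal `s,z`-paths. -/
noncomputable def maxD (G : Multigraph) (lam : G.E → ℕ) (s z : G.V) : ℕ :=
  sSup {k | ∃ f : Fin k → TPath G lam s z, ∀ i j, i ≠ j → SnapDisjoint (f i) (f j)}

/-- `minC G lam s z`: the minimum size of a snapshot `s,z`-cut. -/
noncomputable def minC (G : Multigraph) (lam : G.E → ℕ) (s z : G.V) : ℕ :=
  sInf {h | ∃ S : Finset ℕ, S.card = h ∧ IsSnapCut G lam s z ↑S}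

/-- A proper timefunction: each edge is active at a positive timestep, and no two parallel
edges are active at the same timestep. -/
def ProperTime (G : Multigraph) (lam : G.E → ℕ) : Prop :=
  (∀ e, 0 < lam e) ∧ ∀ e f, e ≠ f → G.ends e = G.ends f → lam e ≠ lam f

/-- `G` is Mengerian for time: for every proper timefunction and every pair of distinct
vertices, the maximum number of pairwise snapshot disjoint temporal `s,z`-paths equals the
minimum size of a snapshot `s,z`-cut. -/
def Mengerian (G : Multigraph) : Prop :=
  ∀ lam : G.E → ℕ, ProperTime G lam → ∀ s z : G.V, s ≠ z →
    maxD G lam s z = minC G lam s z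

/-- `H` is a subgraph of `G` (up to isomorphism): `H` embeds into `G`. -/
def IsSubgraph (H G : Multigraph) : Prop :=
  ∃ (fv : H.V → G.V) (fe : H.E → G.E),
    Function.Injective fv ∧ Function.Injective fe ∧
    ∀ e, G.ends (fe e) = (H.ends e).map fv

/-- The m-subdivision of the multiedge `xy` of `G`: delete all edges between `x` and `y`,
add a new vertex (`none`), and join it to each of `x` and `y` by as many parallel edges as
there were between `x` and `y`. -/
def Multigraph.msubdiv (G : Multigraph) (x y : G.V) : Multigraph where
  V := Option G.V
  E := {e : G.E // G.ends e ≠ s(x, y)} ⊕ ({e : G.E // G.ends e = s(x, y)} × Bool)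
  fintypeV := inferInstance
  decEqV := inferInstance
  fintypeE := inferInstance
  decEqE := inferInstance
  ends := fun t =>
    match t with
    | .inl e => (G.ends e.1).map some
    | .inr (_, true) => s(some x, (none : Option G.V))
    | .inr (_, false) => s((none : Option G.V), some y)
  loopless := by
    rintro (⟨e, he⟩ | ⟨e, b⟩)
    · simpa [Sym2.isDiag_map (Option.some_injective _)] using G.loopless e
    · cases b <;> simp [Sym2.mk_isDiag_iff]

/-- Isomorphism of multigraphs. -/
def MIso (G H : Multigraph) : Prop :=
  ∃ (fv : G.V ≃ H.V) (fe : G.E ≃ H.E), ∀ e, H.ends (fe e) = (G.ends e).map fv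

/-- `B` is obtained from `A` by m-subdividing one of its multiedges. -/
def SubdivStep (A B : Multigraph) : Prop :=
  ∃ x y : A.V, (∃ e, A.ends e = s(x, y)) ∧ MIso (A.msubdiv x y) B

/-- `H` is an m-topological minor of `G`: some subgraph of `G` can be obtained from `H` by
a sequence of m-subdivisions. -/
def IsMTopMinor (H G : Multigraph) : Prop :=
  ∃ K, Relation.ReflTransGen SubdivStep H K ∧ IsSubgraph K G

/-- The multigraph obtained from `G` by keeping only the edges satisfying `P`. -/
def Multigraph.restrictE (G : Multigraph) (P : G.E → Prop) [DecidablePred P] : Multigraph where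
  V := G.V
  E := {e : G.E // P e}
  fintypeV := G.fintypeV
  decEqV := G.decEqV
  fintypeE := inferInstance
  decEqE := inferInstance
  ends := fun e => G.ends e.1
  loopless := fun e => G.loopless e.1

/-- The underlying simple graph of a multigraph. -/
def Multigraph.simple (G : Multigraph) : SimpleGraph G.V where
  Adj u v := ∃ e, G.ends e = s(u, v)
  symm := by
    constructor
    rintro u v ⟨e, he⟩
    exact ⟨e, by rw [he, Sym2.eq_swap]⟩
  loopless := by
    constructor
    rintro u ⟨e, he⟩
    exact G.loopless e (by rw [he]; exact Sym2.mk_isDiag_iff.2 rfl)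



section Helpers

variable {G : Multigraph} {lam : G.E → ℕ} {s z : G.V}

lemma TPath.mem_times {P : TPath G lam s z} {t : ℕ} :
    t ∈ P.times ↔ ∃ e ∈ P.edges, lam e = t := Iff.rfl

lemma SnapDisjoint.not_mem {P Q : TPath G lam s z} (h : SnapDisjoint P Q) {t : ℕ}
    (ht : t ∈ P.times) (ht' : t ∈ Q.times) : False := by
  have : t ∈ P.times ∩ Q.times := ⟨ht, ht'⟩
  rw [h] at this; exact this

lemma TPath.edges_ne_nil (hsz : s ≠ z) (P : TPath G lam s z) : P.edges ≠ [] := by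
  intro h
  have hlen : P.verts.length = 1 := by have := P.len_eq; simp [h] at this; omega
  obtain ⟨a, ha⟩ := List.length_eq_one_iff.1 hlen
  have h1 : P.verts.head? = some a := by rw [ha]; rfl
  have h2 : P.verts.getLast? = some a := by rw [ha]; rfl
  rw [P.head_eq] at h1; rw [P.last_eq] at h2
  exact hsz ((Option.some.inj h1).trans (Option.some.inj h2).symm)

/-- Pick a time in each of pairwise snapshot-disjoint paths; if all picked times lie in a
finset `S`, the number of paths is at most `S.card`. -/
lemma card_le_of_times {k : ℕ} {f : Fin k → TPath G lam s z}
    (hf : ∀ i j, i ≠ j → SnapDisjoint (f i) (f j))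
    {S : Finset ℕ} (τ : Fin k → ℕ) (hτ : ∀ i, τ i ∈ (f i).times) (hS : ∀ i, τ i ∈ S) :
    k ≤ S.card := by
  have hinj : Function.Injective (fun i => (⟨τ i, hS i⟩ : {x // x ∈ S})) := by
    intro i j hij
    by_contra hne
    have := (hf i j hne).not_mem (hτ i) (by rw [show τ i = τ j from congrArg Subtype.val hij]; exact hτ j)
    exact this
  simpa using Fintype.card_le_of_injective _ hinj

/-- the head edge of a path, when `s ≠ z`. -/
lemma TPath.exists_time (hsz : s ≠ z) (P : TPath G lam s z) : ∃ t, t ∈ P.times := by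
  obtain ⟨e, l, he⟩ := List.exists_cons_of_ne_nil (P.edges_ne_nil hsz)
  exact ⟨lam e, e, by rw [he]; exact List.mem_cons_self, rfl⟩

lemma isSnapCut_univ_image (hsz : s ≠ z) :
    IsSnapCut G lam s z ↑(Finset.image lam Finset.univ) := by
  intro P
  obtain ⟨e, l, he⟩ := List.exists_cons_of_ne_nil (P.edges_ne_nil hsz)
  exact ⟨e, by rw [he]; exact List.mem_cons_self, by simp⟩

lemma DSet_mem_le (hsz : s ≠ z) {k : ℕ}
    (hk : k ∈ {k | ∃ f : Fin k → TPath G lam s z, ∀ i j, i ≠ j → SnapDisjoint (f i) (f j)})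
    {S : Finset ℕ} (hS : IsSnapCut G lam s z ↑S) : k ≤ S.card := by
  obtain ⟨f, hf⟩ := hk
  choose e he hmem using fun i => hS (f i)
  exact card_le_of_times hf (fun i => lam (e i)) (fun i => ⟨e i, he i, rfl⟩) hmem

lemma DSet_bddAbove (hsz : s ≠ z) :
    BddAbove {k | ∃ f : Fin k → TPath G lam s z, ∀ i j, i ≠ j → SnapDisjoint (f i) (f j)} :=
  ⟨(Finset.image lam Finset.univ).card,
    fun _ hk => DSet_mem_le hsz hk (isSnapCut_univ_image hsz)⟩

lemma DSet_nonempty :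
    Set.Nonempty {k | ∃ f : Fin k → TPath G lam s z, ∀ i j, i ≠ j → SnapDisjoint (f i) (f j)} :=
  ⟨0, fun i => Fin.elim0 i, fun i => Fin.elim0 i⟩

lemma CSet_nonempty (hsz : s ≠ z) :
    Set.Nonempty {h | ∃ S : Finset ℕ, S.card = h ∧ IsSnapCut G lam s z ↑S} :=
  ⟨_, Finset.image lam Finset.univ, rfl, isSnapCut_univ_image hsz⟩

lemma maxD_le_minC (hsz : s ≠ z) : maxD G lam s z ≤ minC G lam s z := by
  apply csSup_le DSet_nonempty
  intro k hk
  apply le_csInf (CSet_nonempty hsz)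
  rintro c ⟨S, rfl, hS⟩
  exact DSet_mem_le hsz hk hS

lemma maxD_mem (hsz : s ≠ z) :
    maxD G lam s z ∈ {k | ∃ f : Fin k → TPath G lam s z, ∀ i j, i ≠ j → SnapDisjoint (f i) (f j)} :=
  Nat.sSup_mem DSet_nonempty (DSet_bddAbove hsz)

lemma minC_mem (hsz : s ≠ z) :
    minC G lam s z ∈ {h | ∃ S : Finset ℕ, S.card = h ∧ IsSnapCut G lam s z ↑S} :=
  Nat.sInf_mem (CSet_nonempty hsz)

lemma le_maxD (hsz : s ≠ z) {k : ℕ} (f : Fin k → TPath G lam s z)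
    (hf : ∀ i j, i ≠ j → SnapDisjoint (f i) (f j)) : k ≤ maxD G lam s z :=
  le_csSup (DSet_bddAbove hsz) ⟨f, hf⟩

lemma minC_le {S : Finset ℕ} (hS : IsSnapCut G lam s z ↑S) : minC G lam s z ≤ S.card :=
  Nat.sInf_le ⟨S, rfl, hS⟩

end Helpers


section Index

variable {G : Multigraph} {lam : G.E → ℕ} {s z : G.V} (P : TPath G lam s z)

lemma TPath.get_zero (h : 0 < P.verts.length) : P.verts.get ⟨0, h⟩ = s := by
  have := P.head_eq
  rw [List.head?_eq_getElem?, List.getElem?_eq_getElem h] at this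
  simpa using this

lemma TPath.get_last (h : P.edges.length < P.verts.length) :
    P.verts.get ⟨P.edges.length, h⟩ = z := by
  have := P.last_eq
  have hl : P.verts.length - 1 = P.edges.length := by have := P.len_eq; omega
  rw [List.getLast?_eq_getElem?, hl, List.getElem?_eq_getElem h] at this
  simpa using this

lemma TPath.eq_last_of_get_eq {j : Fin P.verts.length} (h : P.verts.get j = z) :
    (j : ℕ) = P.edges.length := by
  have hlt : P.edges.length < P.verts.length := by have := P.len_eq; omega
  have := List.nodup_iff_injective_get.1 P.nodup
    (a₁ := j) (a₂ := ⟨P.edges.length, hlt⟩) (by rw [h, P.get_last])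
  exact congrArg Fin.val this

lemma TPath.eq_zero_of_get_eq {j : Fin P.verts.length} (h : P.verts.get j = s) :
    (j : ℕ) = 0 := by
  have hlt : 0 < P.verts.length := by have := P.len_eq; omega
  have := List.nodup_iff_injective_get.1 P.nodup
    (a₁ := j) (a₂ := ⟨0, hlt⟩) (by rw [h, P.get_zero])
  exact congrArg Fin.val this

lemma TPath.mem_ends_imp {i : ℕ} (hi : i < P.edges.length) {x : G.V}
    (hx : x ∈ G.ends (P.edges.get ⟨i, hi⟩)) :
    x = P.verts.get ⟨i, by have := P.len_eq; omega⟩ ∨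
      x = P.verts.get ⟨i + 1, by have := P.len_eq; omega⟩ := by
  rw [P.ends_eq i hi] at hx
  exact Sym2.mem_iff.1 hx

/-- An edge incident to `z` must be the last edge. -/
lemma TPath.last_edge_of_z {i : ℕ} (hi : i < P.edges.length)
    (hx : z ∈ G.ends (P.edges.get ⟨i, hi⟩)) : i + 1 = P.edges.length := by
  rcases P.mem_ends_imp hi hx with h | h
  · have := P.eq_last_of_get_eq h.symm
    simp at this; omega
  · have := P.eq_last_of_get_eq h.symm
    simpa using this

/-- An edge incident to `s` must be the first edge. -/
lemma TPath.first_edge_of_s {i : ℕ} (hi : i < P.edges.length)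
    (hx : s ∈ G.ends (P.edges.get ⟨i, hi⟩)) : i = 0 := by
  rcases P.mem_ends_imp hi hx with h | h
  · have := P.eq_zero_of_get_eq h.symm
    simpa using this
  · have := P.eq_zero_of_get_eq h.symm
    simp at this

lemma TPath.time_mono {i j : ℕ} (hi : i < P.edges.length) (hj : j < P.edges.length)
    (hij : i ≤ j) : lam (P.edges.get ⟨i, hi⟩) ≤ lam (P.edges.get ⟨j, hj⟩) := by
  rcases Nat.eq_or_lt_of_le hij with rfl | hlt
  · rfl
  · have hp := List.isChain_iff_pairwise.1 P.mono
    have := List.pairwise_iff_get.1 hp ⟨i, by simpa using hi⟩ ⟨j, by simpa using hj⟩ hlt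
    simpa using this

/-- A path of length 1. -/
lemma TPath.single_ends (h1 : P.edges.length = 1) (h0 : 0 < P.edges.length) :
    G.ends (P.edges.get ⟨0, h0⟩) = s(s, z) := by
  have hv := P.len_eq
  rw [P.ends_eq 0 h0, P.get_zero]
  rw [Sym2.congr_right]
  have h2 := P.get_last (by omega)
  rw [List.get_eq_getElem] at h2 ⊢
  simp only [h1] at h2
  exact h2

end Index

section PushPull

lemma lift_list {α β : Type*} (f : α → β) (l : List β) (h : ∀ x ∈ l, ∃ a, f a = x) :
    ∃ l' : List α, l'.map f = l := by
  induction l with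
  | nil => exact ⟨[], rfl⟩
  | cons b t ih =>
    obtain ⟨a, ha⟩ := h b (List.mem_cons_self)
    obtain ⟨t', ht'⟩ := ih (fun x hx => h x (List.mem_cons_of_mem _ hx))
    exact ⟨a :: t', by simp [ha, ht']⟩

variable {G H : Multigraph} {fv : H.V → G.V} {fe : H.E → G.E}
  {lamH : H.E → ℕ} {lamG : G.E → ℕ} {s z : H.V} {c : ℕ}

lemma push_path (hfv : Function.Injective fv)
    (hends : ∀ e, G.ends (fe e) = (H.ends e).map fv)
    (hc : ∀ e, lamG (fe e) = c + lamH e)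
    (P : TPath H lamH s z) : ∃ Q : TPath G lamG (fv s) (fv z), Q.edges = P.edges.map fe := by
  refine ⟨⟨P.verts.map fv, P.edges.map fe, ?_, ?_, ?_, ?_, ?_, ?_⟩, rfl⟩
  · simp [P.len_eq]
  · rw [List.head?_map, P.head_eq]; rfl
  · rw [List.getLast?_map, P.last_eq]; rfl
  · exact P.nodup.map hfv
  · intro i h
    have hi : i < P.edges.length := by simpa using h
    have hpe := P.ends_eq i hi
    simp only [List.get_eq_getElem] at hpe
    simp only [List.get_eq_getElem, List.getElem_map]
    rw [hends, hpe, Sym2.map_pair_eq]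
  · have : (P.edges.map fe).map lamG = P.edges.map (fun e => c + lamH e) := by
      simp only [List.map_map]; exact List.map_congr_left (fun e _ => hc e)
    rw [this]
    have := P.mono
    simp only [List.Chain'] at this ⊢
    rw [List.isChain_map] at this ⊢
    exact this.imp (fun a b hab => by omega)

lemma pull_path (hfv : Function.Injective fv) (hfe : Function.Injective fe)
    (hends : ∀ e, G.ends (fe e) = (H.ends e).map fv)
    (hc : ∀ e, lamG (fe e) = c + lamH e)
    (P : TPath G lamG (fv s) (fv z)) (hall : ∀ e ∈ P.edges, ∃ e', fe e' = e) :
    ∃ Q : TPath H lamH s z, P.edges = Q.edges.map fe := by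
  obtain ⟨le, hle⟩ := lift_list fe P.edges hall
  have hverts : ∀ x ∈ P.verts, ∃ a, fv a = x := by
    intro x hx
    obtain ⟨j, hj⟩ := List.mem_iff_get.1 hx
    rcases Nat.eq_zero_or_pos j.val with h0 | hpos
    · refine ⟨s, ?_⟩
      have : P.verts.get j = fv s := by
        have := P.get_zero (by omega)
        rw [show j = ⟨0, by omega⟩ by ext; exact h0]
        exact this
      rw [← hj, this]
    · obtain ⟨i, hji⟩ : ∃ i, (j : ℕ) = i + 1 := ⟨(j : ℕ) - 1, by omega⟩
      have hi : i < P.edges.length := by have := P.len_eq; have := j.isLt; omega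
      have hmem : x ∈ G.ends (P.edges.get ⟨i, hi⟩) := by
        rw [P.ends_eq i hi, Sym2.mem_iff]
        right
        rw [← hj]
        congr 1
        exact Fin.ext hji
      obtain ⟨e', he'⟩ := hall _ (List.get_mem _ _)
      rw [← he', hends] at hmem
      obtain ⟨a, _, ha⟩ := Sym2.mem_map.1 hmem
      exact ⟨a, ha⟩
  obtain ⟨lv, hlv⟩ := lift_list fv P.verts hverts
  have hlenv : lv.length = le.length + 1 := by
    have := P.len_eq
    rw [← hlv, ← hle] at this
    simpa using this
  refine ⟨⟨lv, le, hlenv, ?_, ?_, ?_, ?_, ?_⟩, hle.symm⟩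
  · have := P.head_eq
    rw [← hlv, List.head?_map] at this
    obtain ⟨a, ha, ha2⟩ := Option.map_eq_some_iff.1 this
    rw [ha]; exact congrArg some (hfv ha2)
  · have := P.last_eq
    rw [← hlv, List.getLast?_map] at this
    obtain ⟨a, ha, ha2⟩ := Option.map_eq_some_iff.1 this
    rw [ha]; exact congrArg some (hfv ha2)
  · exact List.Nodup.of_map fv (by rw [hlv]; exact P.nodup)
  · intro i h
    apply Sym2.map.injective hfv
    have hi : i < P.edges.length := by rw [← hle]; simpa using h
    have h1 : P.edges.get ⟨i, hi⟩ = fe (le.get ⟨i, h⟩) := by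
      have := List.getElem_of_eq hle.symm (by simpa using hi)
      simpa using this
    have hv : ∀ (k : ℕ) (hk1 : k < lv.length) (hk2 : k < P.verts.length),
        P.verts.get ⟨k, hk2⟩ = fv (lv.get ⟨k, hk1⟩) := by
      intro k hk1 hk2
      have := List.getElem_of_eq hlv.symm (by simpa using hk2)
      simpa using this
    have hpe := P.ends_eq i hi
    rw [← hends, ← h1, hpe, Sym2.map_pair_eq,
      hv i (by omega) (by have := P.len_eq; omega),
      hv (i + 1) (by omega) (by have := P.len_eq; omega)]
  · have := P.mono
    rw [← hle] at this
    have h2 : (le.map fe).map lamG = le.map (fun e => c + lamH e) := by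
      simp only [List.map_map]; exact List.map_congr_left (fun e _ => hc e)
    simp only [List.Chain'] at this ⊢
    rw [h2, List.isChain_map] at this
    rw [List.isChain_map]
    exact this.imp (fun a b hab => by omega)

lemma times_of_map {P : TPath G lamG (fv s) (fv z)} {Q : TPath H lamH s z}
    (hc : ∀ e, lamG (fe e) = c + lamH e)
    (h : P.edges = Q.edges.map fe) {t : ℕ} :
    t ∈ P.times ↔ ∃ u ∈ Q.times, c + u = t := by
  constructor
  · rintro ⟨e, he, rfl⟩
    rw [h, List.mem_map] at he
    obtain ⟨e', he', rfl⟩ := he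
    exact ⟨lamH e', ⟨e', he', rfl⟩, (hc e').symm⟩
  · rintro ⟨u, ⟨e', he', rfl⟩, rfl⟩
    exact ⟨fe e', by rw [h]; exact List.mem_map_of_mem he', hc e'⟩

end PushPull


section Key

variable {G H : Multigraph} (fv : H.V → G.V) (fe : H.E → G.E) (lam : H.E → ℕ) (s z : H.V)

/-- The index of an edge of `G`. -/
noncomputable def eidx (G : Multigraph) : G.E → ℕ := fun e => (Fintype.equivFin G.E e : ℕ)

lemma eidx_lt (e : G.E) : eidx G e < Fintype.card G.E := (Fintype.equivFin G.E e).isLt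

lemma eidx_inj : Function.Injective (eidx G) :=
  fun a b h => (Fintype.equivFin G.E).injective (Fin.ext h)

/-- The extension of the timefunction `lam` on `H` to all of `G`. -/
noncomputable def auxLam : G.E → ℕ := fun e =>
  open Classical in
  if h : ∃ e', fe e' = e then Fintype.card G.E + 1 + lam h.choose
  else if fv z ∈ G.ends e ∧ G.ends e ≠ s(fv s, fv z) then eidx G e + 1
  else Fintype.card G.E + 2 + Finset.univ.sup lam + eidx G e

lemma auxLam_fe (hfe : Function.Injective fe) (e' : H.E) :
    auxLam fv fe lam s z (fe e') = Fintype.card G.E + 1 + lam e' := by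
  have h : ∃ a, fe a = fe e' := ⟨e', rfl⟩
  rw [auxLam, dif_pos h, hfe h.choose_spec]

lemma auxLam_B {e : G.E} (h1 : ¬ ∃ e', fe e' = e) (h2 : fv z ∈ G.ends e)
    (h3 : G.ends e ≠ s(fv s, fv z)) : auxLam fv fe lam s z e = eidx G e + 1 := by
  rw [auxLam, dif_neg h1, if_pos ⟨h2, h3⟩]

lemma auxLam_big {e : G.E} (h1 : ¬ ∃ e', fe e' = e)
    (h2 : fv z ∉ G.ends e ∨ G.ends e = s(fv s, fv z)) :
    auxLam fv fe lam s z e = Fintype.card G.E + 2 + Finset.univ.sup lam + eidx G e := by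
  rw [auxLam, dif_neg h1, if_neg (by tauto)]

lemma auxLam_le_n (hfe : Function.Injective fe) (hlam : ProperTime H lam) {e : G.E}
    (he : auxLam fv fe lam s z e ≤ Fintype.card G.E) :
    (¬ ∃ e', fe e' = e) ∧ fv z ∈ G.ends e ∧ G.ends e ≠ s(fv s, fv z) := by
  by_cases h1 : ∃ e', fe e' = e
  · exfalso
    obtain ⟨e', rfl⟩ := h1
    rw [auxLam_fe fv fe lam s z hfe] at he
    omega
  by_cases h2 : fv z ∈ G.ends e ∧ G.ends e ≠ s(fv s, fv z)
  · exact ⟨h1, h2⟩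
  · exfalso
    rw [auxLam, dif_neg h1, if_neg h2] at he
    omega

lemma auxLam_ge_big (hfe : Function.Injective fe) (hlam : ProperTime H lam) {e : G.E}
    (he : Fintype.card G.E + 2 + Finset.univ.sup lam ≤ auxLam fv fe lam s z e) :
    (¬ ∃ e', fe e' = e) ∧ (fv z ∉ G.ends e ∨ G.ends e = s(fv s, fv z)) := by
  by_cases h1 : ∃ e', fe e' = e
  · exfalso
    obtain ⟨e', rfl⟩ := h1
    rw [auxLam_fe fv fe lam s z hfe] at he
    have : lam e' ≤ Finset.univ.sup lam := Finset.le_sup (Finset.mem_univ e')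
    omega
  by_cases h2 : fv z ∈ G.ends e ∧ G.ends e ≠ s(fv s, fv z)
  · exfalso
    rw [auxLam_B fv fe lam s z h1 h2.1 h2.2] at he
    have := eidx_lt e
    omega
  · exact ⟨h1, by tauto⟩

lemma auxLam_proper (hfv : Function.Injective fv) (hfe : Function.Injective fe)
    (hends : ∀ e, G.ends (fe e) = (H.ends e).map fv)
    (hlam : ProperTime H lam) : ProperTime G (auxLam fv fe lam s z) := by
  have hT : ∀ e', lam e' ≤ Finset.univ.sup lam := fun e' => Finset.le_sup (Finset.mem_univ e')
  constructor
  · intro e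
    by_cases h1 : ∃ e', fe e' = e
    · obtain ⟨e', rfl⟩ := h1
      rw [auxLam_fe fv fe lam s z hfe]; omega
    by_cases h2 : fv z ∈ G.ends e ∧ G.ends e ≠ s(fv s, fv z)
    · rw [auxLam_B fv fe lam s z h1 h2.1 h2.2]; omega
    · rw [auxLam_big fv fe lam s z h1 (by tauto)]; omega
  · intro e f hef hends'
    by_cases h1 : ∃ e', fe e' = e <;> by_cases h2 : ∃ f', fe f' = f
    · obtain ⟨e', rfl⟩ := h1
      obtain ⟨f', rfl⟩ := h2
      have hne : e' ≠ f' := fun h => hef (congrArg fe h)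
      have : H.ends e' = H.ends f' := by
        apply Sym2.map.injective hfv
        rw [← hends, ← hends, hends']
      have := hlam.2 e' f' hne this
      rw [auxLam_fe fv fe lam s z hfe, auxLam_fe fv fe lam s z hfe]
      omega
    · -- e image, f not
      obtain ⟨e', rfl⟩ := h1
      rw [auxLam_fe fv fe lam s z hfe]
      by_cases h3 : fv z ∈ G.ends f ∧ G.ends f ≠ s(fv s, fv z)
      · rw [auxLam_B fv fe lam s z h2 h3.1 h3.2]
        have := eidx_lt f
        omega
      · rw [auxLam_big fv fe lam s z h2 (by tauto)]
        have := hT e'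
        omega
    · obtain ⟨f', rfl⟩ := h2
      rw [auxLam_fe fv fe lam s z hfe]
      by_cases h3 : fv z ∈ G.ends e ∧ G.ends e ≠ s(fv s, fv z)
      · rw [auxLam_B fv fe lam s z h1 h3.1 h3.2]
        have := eidx_lt e
        omega
      · rw [auxLam_big fv fe lam s z h1 (by tauto)]
        have := hT f'
        omega
    · have hij : eidx G e ≠ eidx G f := fun h => hef (eidx_inj h)
      have he1 := eidx_lt e
      have hf1 := eidx_lt f
      by_cases h3 : fv z ∈ G.ends e ∧ G.ends e ≠ s(fv s, fv z) <;>
        by_cases h4 : fv z ∈ G.ends f ∧ G.ends f ≠ s(fv s, fv z)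
      · rw [auxLam_B fv fe lam s z h1 h3.1 h3.2, auxLam_B fv fe lam s z h2 h4.1 h4.2]
        omega
      · rw [auxLam_B fv fe lam s z h1 h3.1 h3.2, auxLam_big fv fe lam s z h2 (by tauto)]
        omega
      · rw [auxLam_big fv fe lam s z h1 (by tauto), auxLam_B fv fe lam s z h2 h4.1 h4.2]
        omega
      · rw [auxLam_big fv fe lam s z h1 (by tauto), auxLam_big fv fe lam s z h2 (by tauto)]
        omega

end Key


section Classify

variable {G H : Multigraph} {fv : H.V → G.V} {fe : H.E → G.E} {lam : H.E → ℕ} {s z : H.V}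

/-- Every temporal `fv s, fv z`-path in `(G, auxLam)` either uses only image edges, or
consists of a single non-image edge joining `fv s` and `fv z`. -/
lemma auxLam_classify (hfv : Function.Injective fv) (hfe : Function.Injective fe)
    (hends : ∀ e, G.ends (fe e) = (H.ends e).map fv) (hlam : ProperTime H lam)
    (P : TPath G (auxLam fv fe lam s z) (fv s) (fv z)) :
    (∀ e ∈ P.edges, ∃ e', fe e' = e) ∨
      ∃ a, (¬ ∃ e', fe e' = a) ∧ G.ends a = s(fv s, fv z) ∧ P.edges = [a] := by
  by_cases hall : ∀ e ∈ P.edges, ∃ e', fe e' = e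
  · exact Or.inl hall
  right
  push_neg at hall
  obtain ⟨f, hfmem, hnImg'⟩ := hall
  have hnImg : ¬ ∃ e', fe e' = f := fun ⟨e', h⟩ => hnImg' e' h
  obtain ⟨i0, hi0⟩ := List.mem_iff_get.1 hfmem
  have hL0 : 0 < P.edges.length := lt_of_le_of_lt (Nat.zero_le _) i0.isLt
  -- first: if the path has exactly one edge, its ends are `s(fv s, fv z)`
  have hsingle : P.edges.length = 1 → ∃ a, (¬ ∃ e', fe e' = a) ∧
      G.ends a = s(fv s, fv z) ∧ P.edges = [a] := by
    intro hL1
    obtain ⟨a, ha⟩ := List.length_eq_one_iff.1 hL1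
    have hfa : f = a := by
      have := hfmem
      rw [ha] at this
      simpa using this
    refine ⟨a, hfa ▸ hnImg, ?_, ha⟩
    have h2 := P.single_ends hL1 hL0
    have hga : P.edges.get ⟨0, hL0⟩ = a := by
      have := List.getElem_of_eq ha hL0
      simpa using this
    rw [← hga]
    exact h2
  by_cases hA : G.ends f = s(fv s, fv z)
  · -- f incident to both endpoints, hence unique edge
    have hfi : P.edges.get ⟨(i0 : ℕ), i0.isLt⟩ = f := hi0
    have hz : fv z ∈ G.ends (P.edges.get ⟨(i0 : ℕ), i0.isLt⟩) := by
      rw [hfi, hA, Sym2.mem_iff]; right; rfl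
    have hs : fv s ∈ G.ends (P.edges.get ⟨(i0 : ℕ), i0.isLt⟩) := by
      rw [hfi, hA, Sym2.mem_iff]; left; rfl
    have h1 := P.last_edge_of_z i0.isLt hz
    have h2 := P.first_edge_of_s i0.isLt hs
    exact hsingle (by omega)
  · exfalso
    by_cases hzf : fv z ∈ G.ends f
    · -- B edge: its time is at most n, and so is the first edge's time; contradiction
      have hfi : P.edges.get ⟨(i0 : ℕ), i0.isLt⟩ = f := hi0
      have hvalf : auxLam fv fe lam s z f = eidx G f + 1 := auxLam_B fv fe lam s z hnImg hzf hA
      have ht0 : auxLam fv fe lam s z (P.edges.get ⟨0, hL0⟩) ≤ auxLam fv fe lam s z f := by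
        have := P.time_mono hL0 i0.isLt (Nat.zero_le _)
        rwa [hfi] at this
      have hle : auxLam fv fe lam s z (P.edges.get ⟨0, hL0⟩) ≤ Fintype.card G.E := by
        have := eidx_lt f
        omega
      obtain ⟨_, hz0, hne0⟩ := auxLam_le_n fv fe lam s z hfe hlam hle
      have hL1 : P.edges.length = 1 := by
        have := P.last_edge_of_z hL0 hz0
        omega
      exact hne0 (P.single_ends hL1 hL0)
    · -- C edge: big time, so the last edge has big time, hence is an A edge; contradiction
      have hfi : P.edges.get ⟨(i0 : ℕ), i0.isLt⟩ = f := hi0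
      have hvalf : auxLam fv fe lam s z f = Fintype.card G.E + 2 + Finset.univ.sup lam + eidx G f :=
        auxLam_big fv fe lam s z hnImg (Or.inl hzf)
      have hLlt : P.edges.length - 1 < P.edges.length := by omega
      have hzg : fv z ∈ G.ends (P.edges.get ⟨P.edges.length - 1, hLlt⟩) := by
        rw [P.ends_eq _ hLlt, Sym2.mem_iff]
        right
        have hzL := P.get_last (by have := P.len_eq; omega)
        have heq : P.verts.get ⟨P.edges.length - 1 + 1, by have := P.len_eq; omega⟩ =
            P.verts.get ⟨P.edges.length, by have := P.len_eq; omega⟩ := by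
          congr 1
          exact Fin.ext (by simp; omega)
        exact (heq.trans hzL).symm
      have htg : auxLam fv fe lam s z f ≤ auxLam fv fe lam s z (P.edges.get ⟨P.edges.length - 1, hLlt⟩) := by
        have := P.time_mono i0.isLt hLlt (by have := i0.isLt; omega)
        rwa [hfi] at this
      have hbig : Fintype.card G.E + 2 + Finset.univ.sup lam ≤
          auxLam fv fe lam s z (P.edges.get ⟨P.edges.length - 1, hLlt⟩) := by omega
      obtain ⟨hnImgg, hgor⟩ := auxLam_ge_big fv fe lam s z hfe hlam hbig
      rcases hgor with hcon | hge
      · exact hcon hzg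
      · -- last edge joins fv s and fv z, hence is also the first edge, so the path is single
        have hsg : fv s ∈ G.ends (P.edges.get ⟨P.edges.length - 1, hLlt⟩) := by
          rw [hge, Sym2.mem_iff]; left; rfl
        have h2 := P.first_edge_of_s hLlt hsg
        have hL1 : P.edges.length = 1 := by omega
        -- then f is the unique edge, so fv z ∈ G.ends f, contradiction
        have := P.single_ends hL1 hL0
        have hfi0 : (i0 : ℕ) = 0 := by have := i0.isLt; omega
        have hff : P.edges.get ⟨0, hL0⟩ = f := by
          rw [← hfi]
          congr 1
          exact Fin.ext (by simp [hfi0])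
        rw [hff] at this
        exact hzf (by rw [this, Sym2.mem_iff]; right; rfl)

end Classify


section Main

lemma single_tpath {G : Multigraph} {lamG : G.E → ℕ} {u v : G.V} (huv : u ≠ v) {a : G.E}
    (ha : G.ends a = s(u, v)) : ∃ Q : TPath G lamG u v, Q.edges = [a] := by
  refine ⟨⟨[u, v], [a], rfl, rfl, rfl, by simp [huv], ?_, List.isChain_singleton _⟩, rfl⟩
  intro i h
  have hi : i = 0 := by
    have : i < 1 := by simpa using h
    omega
  subst hi
  simpa using ha

lemma key_sub {G H : Multigraph} (fv : H.V → G.V) (fe : H.E → G.E)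
    (hfv : Function.Injective fv) (hfe : Function.Injective fe)
    (hends : ∀ e, G.ends (fe e) = (H.ends e).map fv)
    (hG : Mengerian G) : Mengerian H := by
  intro lam hlam s z hsz
  classical
  have hsz' : fv s ≠ fv z := fun h => hsz (hfv h)
  set lam' := auxLam fv fe lam s z with hlamdef
  have hproper' := auxLam_proper fv fe lam s z hfv hfe hends hlam
  have hmain : maxD G lam' (fv s) (fv z) = minC G lam' (fv s) (fv z) :=
    hG lam' hproper' _ _ hsz'
  have hc : ∀ e', lam' (fe e') = (Fintype.card G.E + 1) + lam e' := fun e' =>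
    auxLam_fe fv fe lam s z hfe e'
  set A : Finset G.E :=
    Finset.univ.filter (fun e => (¬ ∃ e', fe e' = e) ∧ G.ends e = s(fv s, fv z)) with hA
  -- Inequality 1 : maxD G ≤ maxD H + |A|
  have h1 : maxD G lam' (fv s) (fv z) ≤ maxD H lam s z + A.card := by
    obtain ⟨F, hF⟩ := maxD_mem (G := G) (lam := lam') hsz'
    set p : Fin (maxD G lam' (fv s) (fv z)) → Prop :=
      (fun i => ∀ e ∈ (F i).edges, ∃ e', fe e' = e) with hp
    have hsplit := Finset.card_filter_add_card_filter_not (s := Finset.univ) p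
    rw [Finset.card_univ, Fintype.card_fin] at hsplit
    have hI1 : (Finset.univ.filter p).card ≤ maxD H lam s z := by
      set eqv := (Finset.univ.filter p).equivFin.symm with heqv
      have hpull : ∀ j : Fin (Finset.univ.filter p).card,
          ∃ Q : TPath H lam s z, (F (eqv j).1).edges = Q.edges.map fe := by
        intro j
        have hmem := (eqv j).2
        rw [Finset.mem_filter] at hmem
        exact pull_path hfv hfe hends hc (F (eqv j).1) hmem.2
      choose g hg using hpull
      apply le_maxD hsz g
      intro i j hij
      rw [SnapDisjoint, Set.eq_empty_iff_forall_notMem]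
      rintro t ⟨hti, htj⟩
      have hne : (eqv i).1 ≠ (eqv j).1 := by
        intro h
        exact hij (eqv.injective (Subtype.ext h))
      refine (hF _ _ hne).not_mem (t := Fintype.card G.E + 1 + t) ?_ ?_
      · exact (times_of_map hc (hg i)).2 ⟨t, hti, rfl⟩
      · exact (times_of_map hc (hg j)).2 ⟨t, htj, rfl⟩
    have hI2 : (Finset.univ.filter (fun i => ¬ p i)).card ≤ A.card := by
      have hsub : ∀ i ∈ Finset.univ.filter (fun i => ¬ p i), ∃ a ∈ A, (F i).edges = [a] := by
        intro i hi
        rw [Finset.mem_filter] at hi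
        rcases auxLam_classify hfv hfe hends hlam (F i) with h | ⟨a, ha1, ha2, ha3⟩
        · exact absurd h hi.2
        · exact ⟨a, Finset.mem_filter.2 ⟨Finset.mem_univ _, ha1, ha2⟩, ha3⟩
      have hle2 : (Finset.univ.filter (fun i => ¬ p i)).card ≤ (A.image some).card := by
        apply Finset.card_le_card_of_injOn (fun i => ((F i).edges).head?)
        · intro i hi
          obtain ⟨a, haA, hea⟩ := hsub i hi
          dsimp only
          rw [hea]
          exact Finset.mem_image_of_mem some haA
        · intro i hi j hj hij2
          by_contra hne
          obtain ⟨a, haA, hea⟩ := hsub i (Finset.mem_coe.1 hi)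
          obtain ⟨b, hbA, heb⟩ := hsub j (Finset.mem_coe.1 hj)
          have hab : a = b := by
            have hij3 : (F i).edges.head? = (F j).edges.head? := hij2
            rw [hea, heb] at hij3
            simpa using hij3
          apply (hF i j hne).not_mem (t := lam' a)
          · exact ⟨a, by rw [hea]; exact List.mem_singleton.2 rfl, rfl⟩
          · exact ⟨b, by rw [heb]; exact List.mem_singleton.2 rfl, by rw [hab]⟩
      exact le_trans hle2 Finset.card_image_le
    omega
  -- Inequality 2 : minC H + |A| ≤ minC G
  have h2 : minC H lam s z + A.card ≤ minC G lam' (fv s) (fv z) := by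
    obtain ⟨S, hScard, hScut⟩ := minC_mem (G := G) (lam := lam') hsz'
    have hAS : ∀ a ∈ A, lam' a ∈ S := by
      intro a ha
      obtain ⟨Q, hQ⟩ := single_tpath (lamG := lam') hsz'
        ((Finset.mem_filter.1 ha).2.2)
      obtain ⟨e, he, heS⟩ := hScut Q
      rw [hQ] at he
      have : e = a := by simpa using he
      rwa [this] at heS
    have hsplit := Finset.card_filter_add_card_filter_not (s := S)
      (fun u => u ≤ Fintype.card G.E + 1 + Finset.univ.sup lam)
    have hm : A.card ≤
        (S.filter (fun u => ¬ u ≤ Fintype.card G.E + 1 + Finset.univ.sup lam)).card := by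
      have himg : A.image lam' ⊆
          S.filter (fun u => ¬ u ≤ Fintype.card G.E + 1 + Finset.univ.sup lam) := by
        intro t ht
        rw [Finset.mem_image] at ht
        obtain ⟨a, haA, rfl⟩ := ht
        have haA' := Finset.mem_filter.1 haA
        have haval : lam' a = Fintype.card G.E + 2 + Finset.univ.sup lam + eidx G a :=
          auxLam_big fv fe lam s z haA'.2.1 (Or.inr haA'.2.2)
        rw [Finset.mem_filter]
        exact ⟨hAS a haA, by omega⟩
      have hinj : Set.InjOn lam' ↑A := by
        intro a ha b hb hab
        have ha' := Finset.mem_filter.1 (Finset.mem_coe.1 ha)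
        have hb' := Finset.mem_filter.1 (Finset.mem_coe.1 hb)
        have hva : lam' a = Fintype.card G.E + 2 + Finset.univ.sup lam + eidx G a :=
          auxLam_big fv fe lam s z ha'.2.1 (Or.inr ha'.2.2)
        have hvb : lam' b = Fintype.card G.E + 2 + Finset.univ.sup lam + eidx G b :=
          auxLam_big fv fe lam s z hb'.2.1 (Or.inr hb'.2.2)
        exact eidx_inj (by omega)
      calc A.card = (A.image lam').card := (Finset.card_image_of_injOn hinj).symm
        _ ≤ _ := Finset.card_le_card himg
    have hcH : minC H lam s z ≤
        (S.filter (fun u => u ≤ Fintype.card G.E + 1 + Finset.univ.sup lam)).card := by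
      have hcut : IsSnapCut H lam s z
          ↑((S.filter (fun u => u ≤ Fintype.card G.E + 1 + Finset.univ.sup lam)).image
            (fun u => u - (Fintype.card G.E + 1))) := by
        intro P
        obtain ⟨Q, hQ⟩ := push_path hfv hends hc P
        obtain ⟨e, he, heS⟩ := hScut Q
        rw [hQ, List.mem_map] at he
        obtain ⟨e', he', rfl⟩ := he
        refine ⟨e', he', ?_⟩
        rw [hc e'] at heS
        have hle : Fintype.card G.E + 1 + lam e' ≤
            Fintype.card G.E + 1 + Finset.univ.sup lam := by
          have := Finset.le_sup (f := lam) (Finset.mem_univ e')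
          omega
        refine Finset.mem_coe.2 (Finset.mem_image.2
          ⟨Fintype.card G.E + 1 + lam e', Finset.mem_filter.2 ⟨heS, hle⟩, by omega⟩)
      calc minC H lam s z ≤ _ := minC_le hcut
        _ ≤ _ := Finset.card_image_le
    omega
  have h3 := maxD_le_minC (G := H) (lam := lam) hsz
  omega

end Main

/-- `G` is Mengerian for time iff every subgraph of `G` is Mengerian for time. -/
theorem stmt3 (G : Multigraph) :
    Mengerian G ↔ ∀ H : Multigraph, IsSubgraph H G → Mengerian H := by
  constructor
  · rintro hG H ⟨fv, fe, hfv, hfe, hends⟩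
    exact key_sub fv fe hfv hfe hends hG
  · intro h
    exact h G ⟨id, id, Function.injective_id, Function.injective_id,
      fun e => by simp [Sym2.map_id]⟩
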